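/- arXiv:2206.10224 — 2 statements merged into one kernel-verified Lean document; each statement's English description precedes it below -/
import Mathlib

section
/- (Proposition 5.1, part 2.) Assume [A1], [A2], λ > 0, q > [p]₁, k > 1 and ∫₀^∞ y dF(y) < ∞. Then the dual value extends to the negative semi-axis by the formula Λ*(x) = max{Λ*(0) + k·x, 0} for every x < 0. -/
open MeasureTheory Set Real Filter
open scoped ENNReal

noncomputable section

/-- A retention (reinsurance) policy: a Borel measurable function `u` with
`0 ≤ u y ≤ y` for all `y ≥ 0`. -/
def IsRetention (u : ℝ → ℝ) : Prop :=
  Measurable u ∧ ∀ y : ℝ, 0 ≤ y → 0 ≤ u y ∧ u y ≤ y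

/-- The inner supremum `sup_{0 ≤ y ≤ z} |p(y,x) − p(y,x')|` appearing in `[p]₁`. -/
def supDiff (p : ℝ → ℝ → ℝ) (x x' z : ℝ) : ℝ :=
  sSup ((fun y => |p y x - p y x'|) '' Icc 0 z)

/-- Assumption [A1]: `p ≥ 0` and `p` is non-decreasing in each argument on `[0,∞)`. -/
def AssumptionA1 (p : ℝ → ℝ → ℝ) : Prop :=
  (∀ y x : ℝ, 0 ≤ y → 0 ≤ x → 0 ≤ p y x) ∧
  (∀ x : ℝ, 0 ≤ x → MonotoneOn (fun y => p y x) (Ici 0)) ∧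
  (∀ y : ℝ, 0 ≤ y → MonotoneOn (fun x => p y x) (Ici 0))

/-- Assumption [A2], with the real constant `P1` standing for the finite quantity `[p]₁`:
`p` is (jointly) measurable, uniformly continuous on `[0,∞)²`,
`‖p‖₀ = ∫ p(y,0) dF(y)` is finite, and the defining bound of `[p]₁` holds. -/
def AssumptionA2 (F : Measure ℝ) (p : ℝ → ℝ → ℝ) (P1 : ℝ) : Prop :=
  Measurable (fun z : ℝ × ℝ => p z.1 z.2) ∧
  UniformContinuousOn (fun z : ℝ × ℝ => p z.1 z.2) (Ici 0 ×ˢ Ici 0) ∧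
  Integrable (fun y => p y 0) F ∧
  0 ≤ P1 ∧
  (∀ x x' : ℝ, 0 ≤ x → 0 ≤ x' → Integrable (fun z => supDiff p x x' z) F) ∧
  (∀ x x' : ℝ, 0 ≤ x → 0 ≤ x' → (∫ z, supDiff p x x' z ∂F) ≤ P1 * |x - x'|)

/-- The generator `𝓛^u ψ(x) = p^u(x) ψ'(x) + λ ∫ ψ(x − u(y)) dF(y) − (λ+q) ψ(x)`,
where `ψ'` denotes an (a.e.) derivative of `ψ`. -/
def gen (F : MeasureTheory.Measure ℝ) (p : ℝ → ℝ → ℝ) (lam q : ℝ) (u : ℝ → ℝ)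
    (ψ ψ' : ℝ → ℝ) (x : ℝ) : ℝ :=
  (∫ y, p (u y) x ∂F) * ψ' x + lam * (∫ y, ψ (x - u y) ∂F) - (lam + q) * ψ x

/-- The class `𝐅` of dual test functions: `C¹` non-negative functions with `φ' ≤ k` on `ℝ`,
`φ' ≥ 1` on `[0,∞)` and `𝓛^u φ ≤ 0` on `[0,∞)` for every retention policy `u`. -/
def memF (F : MeasureTheory.Measure ℝ) (p : ℝ → ℝ → ℝ) (lam q k : ℝ) (φ : ℝ → ℝ) : Prop :=
  ContDiff ℝ 1 φ ∧ (∀ x : ℝ, 0 ≤ φ x) ∧ (∀ y : ℝ, deriv φ y ≤ k) ∧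
  (∀ y : ℝ, 0 ≤ y → 1 ≤ deriv φ y) ∧
  (∀ u : ℝ → ℝ, IsRetention u → ∀ y : ℝ, 0 ≤ y → gen F p lam q u φ (deriv φ) y ≤ 0)

/-- The dual value `Λ*(x) = inf{φ(x) : φ ∈ 𝐅} ∈ [0,∞]`. -/
def LambdaStar (F : MeasureTheory.Measure ℝ) (p : ℝ → ℝ → ℝ) (lam q k : ℝ) (x : ℝ) : ℝ≥0∞ :=
  ⨅ (φ : ℝ → ℝ) (_ : memF F p lam q k φ), ENNReal.ofReal (φ x)

lemma hasDerivAt_max_sq (x : ℝ) : HasDerivAt (fun y : ℝ => max y 0 ^ 2) (2 * max x 0) x := by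
  rcases lt_trichotomy x 0 with hx | hx | hx
  · have h0 : HasDerivAt (fun _ : ℝ => (0:ℝ)) 0 x := hasDerivAt_const x 0
    have : (fun y : ℝ => max y 0 ^ 2) =ᶠ[nhds x] fun _ => (0:ℝ) := by
      filter_upwards [Iio_mem_nhds hx] with y hy
      have : y ≤ 0 := le_of_lt hy
      simp [max_eq_right this]
    simpa [max_eq_right hx.le] using h0.congr_of_eventuallyEq this
  · subst hx
    rw [hasDerivAt_iff_isLittleO]
    rw [Asymptotics.isLittleO_iff]
    intro c hc
    filter_upwards [Metric.ball_mem_nhds (0:ℝ) hc] with y hy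
    have h1 : |y| < c := by simpa [Real.dist_eq] using hy
    have h2 : max y 0 ≤ |y| := max_le (le_abs_self y) (abs_nonneg y)
    have h3 : (0:ℝ) ≤ max y 0 := le_max_right y 0
    have h5 : |max y 0 ^ 2 - max 0 0 ^ 2 - (y - 0) • (2 * max 0 0)| = max y 0 ^ 2 := by
      simp [abs_of_nonneg (pow_nonneg h3 2)]
    rw [Real.norm_eq_abs, h5, Real.norm_eq_abs, sub_zero]
    nlinarith [abs_nonneg y, mul_nonneg (sub_nonneg.mpr h1.le) (abs_nonneg y)]
  · have h0 : HasDerivAt (fun y : ℝ => y ^ 2) (2 * x) x := by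
      simpa using hasDerivAt_pow 2 x
    have : (fun y : ℝ => max y 0 ^ 2) =ᶠ[nhds x] fun y => y ^ 2 := by
      filter_upwards [Ioi_mem_nhds hx] with y hy
      have : (0:ℝ) ≤ y := le_of_lt hy
      simp [max_eq_left this]
    simpa [max_eq_left hx.le] using h0.congr_of_eventuallyEq this

/-- slope profile of the smoothing. -/
noncomputable def mm (τ c a' σ : ℝ) : ℝ :=
  max (σ/τ) 0 - max (σ/τ - 1) 0 - (1-c) * max ((σ-a')/τ + 1) 0

/-- antiderivative of `mm`. -/
noncomputable def AA (τ c a' σ : ℝ) : ℝ :=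
  τ/2 * (max (σ/τ) 0 ^ 2 - max (σ/τ - 1) 0 ^ 2 - (1-c) * max ((σ-a')/τ + 1) 0 ^ 2)

section mmAA
variable {τ c a' : ℝ} (hτ0 : 0 < τ) (hc0 : 0 ≤ c) (hc1 : c ≤ 1) (ha'4 : 4*τ ≤ a')

include hτ0 in
lemma AA_hasDeriv (σ : ℝ) : HasDerivAt (AA τ c a') (mm τ c a' σ) σ := by
  have hτne : τ ≠ 0 := ne_of_gt hτ0
  have h1 : HasDerivAt (fun σ : ℝ => max (σ/τ) 0 ^ 2) (2 * max (σ/τ) 0 * (1/τ)) σ := by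
    have hinner : HasDerivAt (fun x : ℝ => x / τ) (1/τ) σ := by
      simpa using (hasDerivAt_id σ).div_const τ
    simpa [Function.comp_def] using (hasDerivAt_max_sq (σ/τ)).comp σ hinner
  have h2 : HasDerivAt (fun σ : ℝ => max (σ/τ - 1) 0 ^ 2) (2 * max (σ/τ - 1) 0 * (1/τ)) σ := by
    have hinner : HasDerivAt (fun x : ℝ => x / τ - 1) (1/τ) σ := by
      simpa using ((hasDerivAt_id σ).div_const τ).sub_const 1
    simpa [Function.comp_def] using (hasDerivAt_max_sq (σ/τ - 1)).comp σ hinner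
  have h3 : HasDerivAt (fun σ : ℝ => max ((σ-a')/τ + 1) 0 ^ 2) (2 * max ((σ-a')/τ + 1) 0 * (1/τ)) σ := by
    have hinner : HasDerivAt (fun x : ℝ => (x - a') / τ + 1) (1/τ) σ := by
      simpa using (((hasDerivAt_id σ).sub_const a').div_const τ).add_const 1
    simpa [Function.comp_def] using (hasDerivAt_max_sq ((σ-a')/τ + 1)).comp σ hinner
  have hsum := ((h1.sub h2).sub (h3.const_mul (1-c))).const_mul (τ/2)
  have heq : τ/2 * (2 * max (σ/τ) 0 * (1/τ) - 2 * max (σ/τ - 1) 0 * (1/τ) -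
      (1-c) * (2 * max ((σ-a')/τ + 1) 0 * (1/τ))) = mm τ c a' σ := by
    rw [mm]
    field_simp
  rw [heq] at hsum
  exact hsum

include hτ0 ha'4 in
lemma mm_a' (ha'0 : 0 < a') : mm τ c a' a' = c := by
  have h4a : (4:ℝ) ≤ a'/τ := by rw [le_div_iff₀ hτ0]; linarith
  simp only [mm, sub_self, zero_div, zero_add]
  rw [max_eq_left (by linarith : (0:ℝ) ≤ a'/τ),
      max_eq_left (by linarith : (0:ℝ) ≤ a'/τ - 1),
      max_eq_left (zero_le_one)]
  ring

include hc1 in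
lemma mm_le_one (σ : ℝ) : mm τ c a' σ ≤ 1 := by
  simp only [mm]
  have h3 : 0 ≤ (1-c) * max ((σ-a')/τ + 1) 0 :=
    mul_nonneg (by linarith) (le_max_right _ _)
  rcases le_total (σ/τ) 1 with h | h
  · have e2 : max (σ/τ - 1) 0 = 0 := max_eq_right (by linarith)
    have e1 : max (σ/τ) 0 ≤ 1 := max_le h zero_le_one
    linarith
  · have e1 : max (σ/τ) 0 = σ/τ := max_eq_left (by linarith)
    have e2 : max (σ/τ - 1) 0 = σ/τ - 1 := max_eq_left (by linarith)
    linarith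

include hτ0 ha'4 in
lemma AA_zero {σ : ℝ} (hσ : σ ≤ 0) : AA τ c a' σ = 0 := by
  have e1 : σ/τ ≤ 0 := by rw [div_le_iff₀ hτ0]; linarith
  have e3 : (σ - a')/τ + 1 ≤ 0 := by
    have : (σ - a')/τ ≤ -4 := by rw [div_le_iff₀ hτ0]; nlinarith
    linarith
  simp only [AA, max_eq_right e1, max_eq_right (by linarith : σ/τ - 1 ≤ (0:ℝ)),
    max_eq_right e3]
  ring

include hτ0 ha'4 in
lemma AA_a' : AA τ c a' a' = a' - τ*(2-c)/2 := by
  have h4a : (4:ℝ) ≤ a'/τ := by rw [le_div_iff₀ hτ0]; linarith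
  simp only [AA, sub_self, zero_div, zero_add]
  rw [max_eq_left (by linarith : (0:ℝ) ≤ a'/τ),
      max_eq_left (by linarith : (0:ℝ) ≤ a'/τ - 1),
      max_eq_left (zero_le_one)]
  field_simp
  ring

include hτ0 hc1 in
lemma AA_ub {σ : ℝ} (hσ : 0 ≤ σ) : AA τ c a' σ ≤ σ := by
  have hτne : τ ≠ 0 := ne_of_gt hτ0
  have h1c : (0:ℝ) ≤ 1 - c := by linarith
  have hxτ : σ/τ * τ = σ := div_mul_cancel₀ σ hτne
  have hx0 : 0 ≤ σ/τ := div_nonneg hσ hτ0.le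
  rcases le_total σ τ with h | h
  · have hx1 : σ/τ ≤ 1 := by rw [div_le_iff₀ hτ0]; linarith
    have e1 : max (σ/τ) 0 = σ/τ := max_eq_left hx0
    have e2 : max (σ/τ - 1) 0 = 0 := max_eq_right (by linarith)
    simp only [AA, e1, e2]
    nlinarith [hxτ, mul_nonneg (mul_nonneg hx0 (by linarith : (0:ℝ) ≤ 2 - σ/τ)) hτ0.le,
      mul_nonneg (mul_nonneg h1c (sq_nonneg (max ((σ-a')/τ + 1) 0))) hτ0.le]
  · have hx1 : 1 ≤ σ/τ := by rw [le_div_iff₀ hτ0]; linarith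
    have e1 : max (σ/τ) 0 = σ/τ := max_eq_left hx0
    have e2 : max (σ/τ - 1) 0 = σ/τ - 1 := max_eq_left (by linarith)
    simp only [AA, e1, e2]
    nlinarith [hxτ, mul_nonneg (mul_nonneg h1c (sq_nonneg (max ((σ-a')/τ + 1) 0))) hτ0.le,
      hτ0.le]

include hτ0 hc0 hc1 ha'4 in
lemma AA_nonneg {σ : ℝ} (hσ : σ ≤ a') : 0 ≤ AA τ c a' σ := by
  have h1c : (0:ℝ) ≤ 1 - c := by linarith
  rcases le_total σ 0 with h | h
  · rw [AA_zero hτ0 ha'4 h]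
  · have hx0 : 0 ≤ σ/τ := div_nonneg h hτ0.le
    rcases le_total σ τ with h2 | h2
    · have e2 : max (σ/τ - 1) 0 = 0 := max_eq_right (by
        rw [sub_nonpos, div_le_iff₀ hτ0]; linarith)
      have e3 : max ((σ-a')/τ + 1) 0 = 0 := max_eq_right (by
        have : (σ - a')/τ ≤ -3 := by rw [div_le_iff₀ hτ0]; nlinarith
        linarith)
      simp only [AA, e2, e3]
      nlinarith [hτ0.le, sq_nonneg (max (σ/τ) 0)]
    · have hx1 : 1 ≤ σ/τ := by rw [le_div_iff₀ hτ0]; linarith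
      have e1 : max (σ/τ) 0 = σ/τ := max_eq_left hx0
      have e2 : max (σ/τ - 1) 0 = σ/τ - 1 := max_eq_left (by linarith)
      have hM30 : (0:ℝ) ≤ max ((σ-a')/τ + 1) 0 := le_max_right _ _
      have hM31 : max ((σ-a')/τ + 1) 0 ≤ 1 := by
        apply max_le _ zero_le_one
        have : (σ - a')/τ ≤ 0 := by rw [div_le_iff₀ hτ0]; linarith
        linarith
      simp only [AA, e1, e2]
      have hM2 : max ((σ-a')/τ + 1) 0 ^ 2 ≤ 1 := by nlinarith [hM30, hM31]
      have hb : (1-c) * max ((σ-a')/τ + 1) 0 ^ 2 ≤ 1 := by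
        nlinarith [hM2, sq_nonneg (max ((σ-a')/τ + 1) 0), h1c, hc0]
      nlinarith [hτ0.le, hb]

include hτ0 hc0 hc1 ha'4 in
lemma AA_le {σ : ℝ} (hσ : σ ≤ a') : AA τ c a' σ ≤ AA τ c a' a' := by
  have hτne : τ ≠ 0 := ne_of_gt hτ0
  have h1c : (0:ℝ) ≤ 1 - c := by linarith
  rw [AA_a' hτ0 ha'4]
  rcases le_total σ 0 with h | h
  · rw [AA_zero hτ0 ha'4 h]
    nlinarith [hτ0.le, mul_nonneg hτ0.le hc0, ha'4]
  · have hx0 : 0 ≤ σ/τ := div_nonneg h hτ0.le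
    have hxτ : σ/τ * τ = σ := div_mul_cancel₀ σ hτne
    rcases le_total σ τ with h2 | h2
    · have hx1 : σ/τ ≤ 1 := by rw [div_le_iff₀ hτ0]; linarith
      have e1 : max (σ/τ) 0 = σ/τ := max_eq_left hx0
      have e2 : max (σ/τ - 1) 0 = 0 := max_eq_right (by linarith)
      have e3 : max ((σ-a')/τ + 1) 0 = 0 := max_eq_right (by
        have : (σ - a')/τ ≤ -3 := by rw [div_le_iff₀ hτ0]; nlinarith
        linarith)
      simp only [AA, e1, e2, e3]
      nlinarith [hτ0.le]
    · have hx1 : 1 ≤ σ/τ := by rw [le_div_iff₀ hτ0]; linarith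
      have e1 : max (σ/τ) 0 = σ/τ := max_eq_left hx0
      have e2 : max (σ/τ - 1) 0 = σ/τ - 1 := max_eq_left (by linarith)
      have hM30 : (0:ℝ) ≤ max ((σ-a')/τ + 1) 0 := le_max_right _ _
      have hM31 : max ((σ-a')/τ + 1) 0 ≤ 1 := by
        apply max_le _ zero_le_one
        have : (σ - a')/τ ≤ 0 := by rw [div_le_iff₀ hτ0]; linarith
        linarith
      have hM3lb : 1 - (a'-σ)/τ ≤ max ((σ-a')/τ + 1) 0 := by
        have h5 : (σ-a')/τ + 1 ≤ max ((σ-a')/τ + 1) 0 := le_max_left _ _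
        have h6 : (σ-a')/τ + 1 = 1 - (a'-σ)/τ := by ring
        linarith [h6 ▸ h5]
      have hw : (a'-σ)/τ * τ = a' - σ := div_mul_cancel₀ _ hτne
      have hw0 : 0 ≤ (a'-σ)/τ := div_nonneg (by linarith) hτ0.le
      have hkey : (1-c) * (1 - max ((σ-a')/τ + 1) 0 ^ 2) ≤ 2 * ((a'-σ)/τ) := by
        set M := max ((σ-a')/τ + 1) 0 with hM
        have h7 : (1 - M)*(1 + M) ≤ ((a'-σ)/τ) * 2 :=
          mul_le_mul (by linarith) (by linarith) (by linarith) hw0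
        have h8 : 0 ≤ 1 - M^2 := by nlinarith [hM30, hM31]
        nlinarith [h7, h8, mul_nonneg hc0 h8]
      simp only [AA, e1, e2]
      nlinarith [hkey, hxτ, hw, hτ0.le, hw0, mul_le_mul_of_nonneg_left hkey hτ0.le]

end mmAA


lemma memF_slope {F : MeasureTheory.Measure ℝ} {p : ℝ → ℝ → ℝ} {lam q k : ℝ} {φ : ℝ → ℝ}
    (hφ : memF F p lam q k φ) {s t : ℝ} (hst : s ≤ t) : φ t - φ s ≤ k * (t - s) := by
  have hdiff : Differentiable ℝ φ := hφ.1.differentiable one_ne_zero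
  have hd2 : ∀ s : ℝ, HasDerivAt (fun s => k * s - φ s) (k * 1 - deriv φ s) s :=
    fun s => ((hasDerivAt_id s).const_mul k).sub (hdiff s).hasDerivAt
  have hmono : Monotone fun s => k * s - φ s := by
    apply monotone_of_deriv_nonneg (fun s => (hd2 s).differentiableAt)
    intro s
    rw [(hd2 s).deriv]
    have := hφ.2.2.1 s
    linarith
  have := hmono hst
  dsimp at this
  linarith

set_option maxHeartbeats 1000000 in
lemma key
    (F : Measure ℝ) [IsProbabilityMeasure F] (hF : F (Iio 0) = 0)
    (p : ℝ → ℝ → ℝ) (P1 : ℝ) (hA1 : AssumptionA1 p) (hA2 : AssumptionA2 F p P1)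
    (lam q k : ℝ) (hlam : 0 < lam) (hq : P1 < q) (hk : 1 < k)
    (φ : ℝ → ℝ) (hφ : memF F p lam q k φ) (ε : ℝ) (hε : 0 < ε) :
    ∃ ψ : ℝ → ℝ, memF F p lam q k ψ ∧ ∀ t : ℝ, t ≤ 0 → ψ t ≤ max (φ 0 + k * t) 0 + ε := by
  classical
  obtain ⟨hφ1, hφ0, hφk, hφ1', hφgen⟩ := hφ
  have hφmem : memF F p lam q k φ := ⟨hφ1, hφ0, hφk, hφ1', hφgen⟩
  set a := φ 0 with ha
  set d := deriv φ 0 with hd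
  have hk0 : (0:ℝ) < k := lt_trans one_pos hk
  have hd1 : 1 ≤ d := hφ1' 0 le_rfl
  have hdk : d ≤ k := hφk 0
  have ha0 : 0 ≤ a := hφ0 0
  have hq0 : 0 < q := lt_of_le_of_lt hA2.2.2.2.1 hq
  set η := ε / 2 with hη
  have hη0 : 0 < η := by positivity
  set ρ := η * q / lam with hρ
  have hρ0 : 0 < ρ := by positivity
  set τ := min η ρ / 4 with hτdef
  have hτ0 : 0 < τ := by positivity
  have hτη : 4 * τ ≤ η := by
    have : min η ρ ≤ η := min_le_left _ _
    rw [hτdef]; linarith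
  have hτρ : τ ≤ ρ := by
    have : min η ρ ≤ ρ := min_le_right _ _
    rw [hτdef]; linarith
  set c := d / k with hc
  have hc0 : 0 ≤ c := by positivity
  have hc1 : c ≤ 1 := by rw [hc, div_le_one hk0]; exact hdk
  have hkc : k * c = d := by rw [hc]; field_simp
  set a' := a + η with ha'
  have ha'4 : 4 * τ ≤ a' := by rw [ha']; linarith
  have ha'0 : 0 < a' := by rw [ha']; linarith
  set Ψ : ℝ → ℝ := fun t => AA τ c a' (a' + k*t) + (a' - AA τ c a' a') with hΨ
  set ψ : ℝ → ℝ := fun t => if t ≤ 0 then Ψ t else φ t + η with hψdef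
  set g : ℝ → ℝ := fun t => if t ≤ 0 then k * mm τ c a' (a' + k*t) else deriv φ t with hgdef
  have hm'a' : mm τ c a' a' = c := mm_a' hτ0 ha'4 ha'0
  have hm'le1 : ∀ σ : ℝ, mm τ c a' σ ≤ 1 := mm_le_one hc1
  have hAa' : AA τ c a' a' = a' - τ*(2-c)/2 := AA_a' hτ0 ha'4
  have hΨd : ∀ t : ℝ, HasDerivAt Ψ (k * mm τ c a' (a' + k*t)) t := by
    intro t
    have hinner : HasDerivAt (fun t : ℝ => a' + k * t) k t := by
      simpa using ((hasDerivAt_id t).const_mul k).const_add a'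
    have h1 := ((AA_hasDeriv (τ := τ) (c := c) (a' := a') hτ0 (a' + k*t)).comp t hinner).add_const (a' - AA τ c a' a')
    rw [mul_comm] at h1
    exact h1
  -- basic ψ facts
  have hΨ0 : Ψ 0 = a' := by rw [hΨ]; simp
  have hψeq_neg : ∀ t : ℝ, t ≤ 0 → ψ t = Ψ t := fun t ht => if_pos ht
  have hψeq_pos : ∀ t : ℝ, 0 ≤ t → ψ t = φ t + η := by
    intro t ht
    rcases eq_or_lt_of_le ht with h | h
    · have e : ψ t = Ψ t := if_pos (le_of_eq h.symm)
      rw [e, ← h, hΨ0, ha', ha]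
    · exact if_neg (not_le.mpr h)
  have hgeq_pos : ∀ t : ℝ, 0 ≤ t → g t = deriv φ t := by
    intro t ht
    rcases eq_or_lt_of_le ht with h | h
    · have e : g t = k * mm τ c a' (a' + k*t) := if_pos (le_of_eq h.symm)
      rw [e, ← h, mul_zero, add_zero, hm'a', hkc, hd]
    · exact if_neg (not_le.mpr h)
  -- differentiability
  have hder : ∀ t : ℝ, HasDerivAt ψ (g t) t := by
    intro t
    rcases lt_trichotomy t 0 with h | h | h
    · have e : g t = k * mm τ c a' (a' + k*t) := if_pos h.le
      rw [e]
      refine (hΨd t).congr_of_eventuallyEq ?_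
      filter_upwards [Iio_mem_nhds h] with s hs
      exact if_pos (le_of_lt hs)
    · subst h
      have h1 : HasDerivAt Ψ d 0 := by
        have := hΨd 0
        rwa [mul_zero, add_zero, hm'a', hkc] at this
      have hW1 : HasDerivWithinAt ψ d (Iic 0) 0 :=
        (h1.hasDerivWithinAt).congr (fun s hs => if_pos hs) (if_pos le_rfl)
      have h2 : HasDerivAt (fun s => φ s + η) d 0 := by
        rw [hd]; exact ((hφ1.differentiable one_ne_zero 0).hasDerivAt).add_const η
      have hW2 : HasDerivWithinAt ψ d (Ici 0) 0 :=
        (h2.hasDerivWithinAt).congr (fun s hs => hψeq_pos s hs) (hψeq_pos 0 le_rfl)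
      have h3 := hW1.union hW2
      rw [Iic_union_Ici, hasDerivWithinAt_univ] at h3
      have e : g 0 = d := by
        have e0 : g 0 = k * mm τ c a' (a' + k*0) := if_pos le_rfl
        rw [e0, mul_zero, add_zero, hm'a', hkc]
      rw [e]; exact h3
    · have e : g t = deriv φ t := if_neg (not_le.mpr h)
      rw [e]
      have h2 : HasDerivAt (fun s => φ s + η) (deriv φ t) t :=
        ((hφ1.differentiable one_ne_zero t).hasDerivAt).add_const η
      refine h2.congr_of_eventuallyEq ?_
      filter_upwards [Ioi_mem_nhds h] with s hs
      exact if_neg (not_le.mpr hs)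
  have hdiffψ : Differentiable ℝ ψ := fun t => (hder t).differentiableAt
  have hderiv : deriv ψ = g := funext fun t => (hder t).deriv
  have hgcont : Continuous g := by
    have hm'c : Continuous (mm τ c a') := by
      unfold mm
      exact (((continuous_id.div_const τ).max continuous_const).sub
        (((continuous_id.div_const τ).sub continuous_const).max continuous_const)).sub
        (continuous_const.mul ((((continuous_id.sub continuous_const).div_const τ).add
          continuous_const).max continuous_const))
    have hφ'c : Continuous (deriv φ) := hφ1.continuous_deriv le_rfl
    rw [hgdef]
    exact Continuous.if_le
      (continuous_const.mul (hm'c.comp (continuous_const.add (continuous_const.mul continuous_id))))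
      hφ'c continuous_id continuous_const
      (fun t ht => by
        have ht' : t = 0 := ht
        rw [ht', mul_zero, add_zero, hm'a', hkc, hd])
  have hψC1 : ContDiff ℝ 1 ψ := contDiff_one_iff_deriv.mpr ⟨hdiffψ, by rw [hderiv]; exact hgcont⟩
  have hgite : ∀ t : ℝ, g t = if t ≤ 0 then k * mm τ c a' (a' + k*t) else deriv φ t :=
    fun _ => rfl
  clear_value g ψ Ψ a' c τ ρ η d a
  -- pointwise bounds
  have hψ_upper : ∀ t : ℝ, t ≤ 0 → ψ t ≤ max (a' + k*t) 0 + τ := by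
    intro t ht
    rw [hψeq_neg t ht]
    simp only [hΨ]
    rw [hAa']
    rcases le_total (a' + k*t) 0 with h | h
    · rw [AA_zero hτ0 ha'4 h, max_eq_right h]
      nlinarith [hτ0.le, mul_nonneg hτ0.le hc0]
    · rw [max_eq_left h]
      have := AA_ub (τ := τ) (c := c) (a' := a') hτ0 hc1 h
      nlinarith [mul_nonneg hτ0.le hc0, hτ0.le]
  have hψ_nonneg : ∀ t : ℝ, 0 ≤ ψ t := by
    intro t
    rcases le_total t 0 with h | h
    · rw [hψeq_neg t h]
      simp only [hΨ]
      have h1 : a' + k*t ≤ a' := by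
        have h6 := mul_le_mul_of_nonneg_left h hk0.le
        simp only [mul_zero] at h6
        linarith
      have h2 := AA_nonneg hτ0 hc0 hc1 ha'4 h1
      have h3 : AA τ c a' a' ≤ a' := by rw [hAa']; nlinarith [hτ0.le, mul_nonneg hτ0.le hc0]
      linarith
    · rw [hψeq_pos t h]; linarith [hφ0 t]
  have hψ_le_a' : ∀ t : ℝ, t ≤ 0 → ψ t ≤ a' := by
    intro t ht
    rw [hψeq_neg t ht]
    simp only [hΨ]
    have h1 : a' + k*t ≤ a' := by
      have h6 := mul_le_mul_of_nonneg_left ht hk0.le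
      simp only [mul_zero] at h6
      linarith
    linarith [AA_le hτ0 hc0 hc1 ha'4 h1]
  have hφ_lb : ∀ t : ℝ, t ≤ 0 → a + k * t ≤ φ t := by
    intro t ht
    have := memF_slope hφmem ht
    rw [ha]; linarith
  have hψ_le_φ : ∀ t : ℝ, ψ t ≤ φ t + (η + ρ) := by
    intro t
    rcases le_total t 0 with h | h
    · have h1 := hψ_upper t h
      have h2 := hφ_lb t h
      rcases le_total (a' + k*t) 0 with h3 | h3
      · rw [max_eq_right h3] at h1; linarith [hφ0 t]
      · rw [max_eq_left h3] at h1; linarith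
    · rw [hψeq_pos t h]; linarith [hρ0.le]
  have hφmono : MonotoneOn φ (Ici 0) := by
    apply monotoneOn_of_deriv_nonneg (convex_Ici 0) hφ1.continuous.continuousOn
    · exact fun s _ => ((hφ1.differentiable one_ne_zero) s).differentiableWithinAt
    · intro s hs
      rw [interior_Ici] at hs
      linarith [hφ1' s (le_of_lt hs)]
  -- the generator condition
  have hgen : ∀ u : ℝ → ℝ, IsRetention u → ∀ y : ℝ, 0 ≤ y → gen F p lam q u ψ (deriv ψ) y ≤ 0 := by
    intro u hu y hy
    have hae : ∀ᵐ z ∂F, 0 ≤ z := by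
      rw [ae_iff]
      have e : {z : ℝ | ¬ 0 ≤ z} = Iio 0 := by ext z; simp [not_le]
      rw [e]; exact hF
    have hφy0 : a ≤ φ y := by
      rw [ha]; exact hφmono (mem_Ici.mpr le_rfl) (mem_Ici.mpr hy) hy
    have hψboundy : ∀ t : ℝ, t ≤ y → ψ t ≤ φ y + η := by
      intro t ht
      rcases le_total t 0 with h | h
      · linarith [hψ_le_a' t h]
      · rw [hψeq_pos t h]
        have := hφmono (mem_Ici.mpr h) (mem_Ici.mpr (le_trans h ht)) ht
        linarith
    set un : ℕ → ℝ → ℝ := fun n z => min (u z) n with hun_def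
    have hun : ∀ n : ℕ, IsRetention (un n) := by
      intro n
      exact ⟨hu.1.min measurable_const, fun z hz =>
        ⟨le_min (hu.2 z hz).1 (Nat.cast_nonneg n), le_trans (min_le_left _ _) (hu.2 z hz).2⟩⟩
    have hpmeas : ∀ v : ℝ → ℝ, Measurable v → Measurable (fun z => p (v z) y) :=
      fun v hv => hA2.1.comp (hv.prodMk measurable_const)
    have hpdom : ∀ v : ℝ → ℝ, IsRetention v → ∀ᵐ z ∂F, ‖p (v z) y‖ ≤ p z 0 + supDiff p y 0 z := by
      intro v hv
      filter_upwards [hae] with z hz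
      obtain ⟨hv0, hvz⟩ := hv.2 z hz
      have h1 : 0 ≤ p (v z) y := hA1.1 _ _ hv0 hy
      have h2 : p (v z) y ≤ p z y := hA1.2.1 y hy (mem_Ici.mpr hv0) (mem_Ici.mpr hz) hvz
      have hBdd : BddAbove ((fun w => |p w y - p w 0|) '' Icc 0 z) := by
        refine ⟨p z y + p z 0, ?_⟩
        rintro _ ⟨w, hw, rfl⟩
        have hw0 : 0 ≤ w := hw.1
        have hwy : p w y ≤ p z y := hA1.2.1 y hy (mem_Ici.mpr hw0) (mem_Ici.mpr hz) hw.2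
        have hw0' : p w 0 ≤ p z 0 := hA1.2.1 0 le_rfl (mem_Ici.mpr hw0) (mem_Ici.mpr hz) hw.2
        have hp1 : 0 ≤ p w y := hA1.1 _ _ hw0 hy
        have hp2 : 0 ≤ p w 0 := hA1.1 _ _ hw0 le_rfl
        exact abs_le.mpr ⟨by linarith, by linarith⟩
      have h3 : |p z y - p z 0| ≤ supDiff p y 0 z := le_csSup hBdd ⟨z, ⟨hz, le_rfl⟩, rfl⟩
      have h5 : p z y - p z 0 ≤ |p z y - p z 0| := le_abs_self _
      rw [Real.norm_eq_abs, abs_of_nonneg h1]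
      linarith
    have hpint : Integrable (fun z => p z 0 + supDiff p y 0 z) F :=
      hA2.2.2.1.add (hA2.2.2.2.2.1 y 0 hy le_rfl)
    have hpint_v : ∀ v : ℝ → ℝ, IsRetention v → Integrable (fun z => p (v z) y) F :=
      fun v hv => Integrable.mono' hpint ((hpmeas v hv.1).aestronglyMeasurable) (hpdom v hv)
    have hψmeas : ∀ v : ℝ → ℝ, Measurable v → AEStronglyMeasurable (fun z => ψ (y - v z)) F :=
      fun v hv => ((hψC1.continuous.measurable).comp (measurable_const.sub hv)).aestronglyMeasurable
    have hψdom : ∀ v : ℝ → ℝ, IsRetention v → ∀ᵐ z ∂F, ‖ψ (y - v z)‖ ≤ φ y + η := by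
      intro v hv
      filter_upwards [hae] with z hz
      rw [Real.norm_eq_abs, abs_of_nonneg (hψ_nonneg _)]
      exact hψboundy _ (by linarith [(hv.2 z hz).1])
    have hψint_v : ∀ v : ℝ → ℝ, IsRetention v → Integrable (fun z => ψ (y - v z)) F :=
      fun v hv => Integrable.mono' (integrable_const (φ y + η)) (hψmeas v hv.1) (hψdom v hv)
    have hφint_n : ∀ n : ℕ, Integrable (fun z => φ (y - un n z)) F := by
      intro n
      obtain ⟨C, hC⟩ := (isCompact_Icc (a := y - (n:ℝ)) (b := y)).exists_bound_of_continuousOn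
        hφ1.continuous.continuousOn
      refine Integrable.mono' (integrable_const C)
        (((hφ1.continuous.measurable).comp (measurable_const.sub (hun n).1)).aestronglyMeasurable) ?_
      filter_upwards [hae] with z hz
      refine hC _ ⟨?_, ?_⟩
      · have h6 : un n z ≤ (n:ℝ) := min_le_right _ _
        linarith
      · linarith [((hun n).2 z hz).1]
    have hptend : Tendsto (fun n => ∫ z, p (un n z) y ∂F) atTop (nhds (∫ z, p (u z) y ∂F)) := by
      refine tendsto_integral_of_dominated_convergence _
        (fun n => (hpmeas _ (hun n).1).aestronglyMeasurable) hpint (fun n => hpdom _ (hun n)) ?_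
      filter_upwards [hae] with z hz
      apply tendsto_atTop_of_eventually_const (i₀ := ⌈u z⌉₊)
      intro n hn
      have h6 : u z ≤ (n:ℝ) := le_trans (Nat.le_ceil _) (by exact_mod_cast hn)
      have e : un n z = u z := min_eq_left h6
      rw [e]
    have hψtend : Tendsto (fun n => ∫ z, ψ (y - un n z) ∂F) atTop
        (nhds (∫ z, ψ (y - u z) ∂F)) := by
      refine tendsto_integral_of_dominated_convergence (fun _ => φ y + η)
        (fun n => hψmeas _ (hun n).1) (integrable_const _) (fun n => hψdom _ (hun n)) ?_
      filter_upwards [hae] with z hz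
      apply tendsto_atTop_of_eventually_const (i₀ := ⌈u z⌉₊)
      intro n hn
      have h6 : u z ≤ (n:ℝ) := le_trans (Nat.le_ceil _) (by exact_mod_cast hn)
      have e : un n z = u z := min_eq_left h6
      rw [e]
    have hψy : ψ y = φ y + η := hψeq_pos y hy
    have hdy : deriv ψ y = deriv φ y := by rw [hderiv]; exact hgeq_pos y hy
    have hlamρ : lam * ρ = η * q := by rw [hρ]; field_simp
    have hn_le : ∀ n : ℕ,
        (∫ z, p (un n z) y ∂F) * deriv ψ y + lam * (∫ z, ψ (y - un n z) ∂F)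
          - (lam + q) * ψ y ≤ 0 := by
      intro n
      have h1 := hφgen (un n) (hun n) y hy
      unfold gen at h1
      have h2 : (∫ z, ψ (y - un n z) ∂F) ≤ (∫ z, φ (y - un n z) ∂F) + (η + ρ) := by
        have h3 : (∫ z, ψ (y - un n z) ∂F) ≤ ∫ z, (φ (y - un n z) + (η + ρ)) ∂F :=
          integral_mono (hψint_v _ (hun n)) ((hφint_n n).add (integrable_const _))
            (fun z => hψ_le_φ _)
        rwa [integral_add (hφint_n n) (integrable_const _), integral_const, probReal_univ,
          one_smul] at h3
      rw [hψy, hdy]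
      have h4 : lam * (∫ z, ψ (y - un n z) ∂F) ≤
          lam * (∫ z, φ (y - un n z) ∂F) + (lam * η + lam * ρ) := by
        nlinarith [mul_le_mul_of_nonneg_left h2 hlam.le]
      have hexp : (lam + q) * (φ y + η) = (lam + q) * φ y + lam * η + q * η := by ring
      linarith [h1, h4, hexp, hlamρ]
    have htendall : Tendsto (fun n => (∫ z, p (un n z) y ∂F) * deriv ψ y +
        lam * (∫ z, ψ (y - un n z) ∂F) - (lam + q) * ψ y) atTop
        (nhds (gen F p lam q u ψ (deriv ψ) y)) := by
      unfold gen
      exact ((hptend.mul_const _).add (hψtend.const_mul lam)).sub tendsto_const_nhds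
    exact le_of_tendsto' htendall hn_le
  refine ⟨ψ, ⟨hψC1, hψ_nonneg, ?_, ?_, hgen⟩, ?_⟩
  · -- deriv ψ ≤ k
    intro t
    rw [hderiv]
    by_cases ht : t ≤ 0
    · have e : g t = k * mm τ c a' (a' + k*t) := by rw [hgite]; exact if_pos ht
      rw [e]
      nlinarith [hm'le1 (a' + k*t), hk0.le]
    · have e : g t = deriv φ t := by rw [hgite]; exact if_neg ht
      rw [e]
      exact hφk t
  · -- deriv ψ ≥ 1 on [0,∞)
    intro t ht
    rw [hderiv, hgeq_pos t ht]
    exact hφ1' t ht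
  · -- final bound
    intro t ht
    have h1 := hψ_upper t ht
    have h2 : max (a' + k*t) 0 ≤ max (a + k*t) 0 + η := by
      apply max_le
      · have h5 : a + k*t ≤ max (a + k*t) 0 := le_max_left _ _
        rw [ha']; linarith
      · have h5 : (0:ℝ) ≤ max (a + k*t) 0 := le_max_right _ _
        linarith
    linarith

/-- Proposition 5.1, part 2.  The dual value extends to the negative
semi-axis by `Λ*(x) = max{Λ*(0) + k·x, 0}` for every `x < 0`; in `[0,∞]` this reads
`Λ*(x) = Λ*(0) − k·(−x)` with truncated subtraction. -/
theorem dual_value_negative_axis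
    (F : Measure ℝ) [IsProbabilityMeasure F] (hF : F (Iio 0) = 0)
    (hmean : Integrable (fun y : ℝ => y) F)
    (p : ℝ → ℝ → ℝ) (P1 : ℝ) (hA1 : AssumptionA1 p) (hA2 : AssumptionA2 F p P1)
    (lam q k : ℝ) (hlam : 0 < lam) (hq : P1 < q) (hk : 1 < k)
    (x : ℝ) (hx : x < 0) :
    LambdaStar F p lam q k x
      = LambdaStar F p lam q k 0 - ENNReal.ofReal (k * (-x)) := by
  classical
  have hk0 : (0:ℝ) < k := lt_trans one_pos hk
  have hkx0 : 0 ≤ k * (-x) := mul_nonneg hk0.le (by linarith)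
  set C := ENNReal.ofReal (k * (-x)) with hC
  have hCne : C ≠ ⊤ := ENNReal.ofReal_ne_top
  -- lower bound : Λ*(0) - C ≤ Λ*(x)
  have hge : LambdaStar F p lam q k 0 - C ≤ LambdaStar F p lam q k x := by
    rw [LambdaStar]
    refine le_iInf fun φ => le_iInf fun hφ => ?_
    rw [tsub_le_iff_right]
    have h1 : φ 0 ≤ φ x + k * (-x) := by
      have := memF_slope hφ hx.le
      linarith
    calc LambdaStar F p lam q k 0 ≤ ENNReal.ofReal (φ 0) := by
          rw [LambdaStar]; exact iInf₂_le φ hφ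
    _ ≤ ENNReal.ofReal (φ x + k * (-x)) := ENNReal.ofReal_le_ofReal h1
    _ ≤ ENNReal.ofReal (φ x) + C := by rw [hC]; exact ENNReal.ofReal_add_le
  -- upper bound per test function
  have hup : ∀ φ : ℝ → ℝ, memF F p lam q k φ →
      LambdaStar F p lam q k x ≤ ENNReal.ofReal (φ 0) - C := by
    intro φ hφ
    have hmax : LambdaStar F p lam q k x ≤ ENNReal.ofReal (max (φ 0 + k * x) 0) := by
      apply ENNReal.le_of_forall_pos_le_add
      intro ε hε _
      obtain ⟨ψ, hψ, hψx⟩ := key F hF p P1 hA1 hA2 lam q k hlam hq hk φ hφ ε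
        (by exact_mod_cast hε)
      calc LambdaStar F p lam q k x ≤ ENNReal.ofReal (ψ x) := by
            rw [LambdaStar]; exact iInf₂_le ψ hψ
      _ ≤ ENNReal.ofReal (max (φ 0 + k*x) 0 + ε) := ENNReal.ofReal_le_ofReal (hψx x hx.le)
      _ = ENNReal.ofReal (max (φ 0 + k*x) 0) + ENNReal.ofReal ε :=
            ENNReal.ofReal_add (le_max_right _ _) (by exact_mod_cast hε.le)
      _ = ENNReal.ofReal (max (φ 0 + k*x) 0) + ε := by rw [ENNReal.ofReal_coe_nnreal]
    rcases le_or_gt 0 (φ 0 + k * x) with h | h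
    · rw [max_eq_left h] at hmax
      have e : φ 0 + k * x = φ 0 - k * (-x) := by ring
      rw [e, ENNReal.ofReal_sub _ hkx0] at hmax
      exact hmax
    · rw [max_eq_right h.le, ENNReal.ofReal_zero] at hmax
      exact le_trans hmax zero_le
  -- combine
  have hle : LambdaStar F p lam q k x ≤ LambdaStar F p lam q k 0 - C := by
    rcases le_or_gt (LambdaStar F p lam q k 0) C with h | h
    · rw [tsub_eq_zero_of_le h]
      apply ENNReal.le_of_forall_pos_le_add
      intro δ hδ _
      have hδ' : (δ : ℝ≥0∞) ≠ 0 := by exact_mod_cast hδ.ne'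
      have h1 : LambdaStar F p lam q k 0 < C + δ :=
        lt_of_le_of_lt h (ENNReal.lt_add_right hCne hδ')
      rw [LambdaStar, iInf_lt_iff] at h1
      obtain ⟨φ, h1⟩ := h1
      rw [iInf_lt_iff] at h1
      obtain ⟨hφ, h1⟩ := h1
      calc LambdaStar F p lam q k x ≤ ENNReal.ofReal (φ 0) - C := hup φ hφ
      _ ≤ (C + δ) - C := tsub_le_tsub_right h1.le _
      _ = δ := by rw [ENNReal.add_sub_cancel_left hCne]
      _ = 0 + δ := by rw [zero_add]
    · refine ENNReal.le_sub_of_add_le_right hCne ?_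
      rw [LambdaStar]
      refine le_iInf fun φ => le_iInf fun hφ => ?_
      have h3 : C ≤ ENNReal.ofReal (φ 0) := by
        refine le_trans h.le ?_
        rw [LambdaStar]; exact iInf₂_le φ hφ
      calc LambdaStar F p lam q k x + C ≤ (ENNReal.ofReal (φ 0) - C) + C :=
            add_le_add_left (hup φ hφ) C
      _ = ENNReal.ofReal (φ 0) := tsub_add_cancel_of_le h3
  exact le_antisymm hle hge
end
end

section
/- (Polynomial perturbation estimate of Subsection 5.3.4.) Assume [A1], [A2], λ > 0, q > 0, and set E[C] := ∫₀^∞ y dF(y) < ∞. Let x^max > 0, ε > 0. Let φ : ℝ → ℝ be differentiable almost everywhere with 𝓛^u φ(y) ≤ 0 for almost every y ∈ [0, x^max] and every u ∈ 𝓡, and let φ̃ : ℝ → ℝ be C¹ with |φ̃(z) − φ(z)| ≤ ε·|z| for all z ≤ x^max and |φ̃'(y) − φ'(y)| ≤ ε for almost every y ∈ [0, x^max]. Then, setting C := (([p]₁ + 2λ + q)·x^max + λ·E[C] + ‖p‖₀)/q, one has 𝓛^u φ̃(y) ≤ q·C·ε, and consequently 𝓛^u (φ̃ + C·ε)(y)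 ≤ 0, for almost every y ∈ [0, x^max] and every u ∈ 𝓡. -/
open MeasureTheory Set Real Filter

noncomputable section

/-- polynomial perturbation estimate of Subsection 5.3.4.  If `φ` is a.e.
differentiable with `𝓛^u φ ≤ 0` a.e. on `[0, x^max]`, and the `C¹` function `φ̃` satisfies
`|φ̃ − φ| ≤ ε|z|` for `z ≤ x^max` and `|φ̃' − φ'| ≤ ε` a.e. on `[0, x^max]`, then, with
`C = (([p]₁ + 2λ + q) x^max + λ E[C] + ‖p‖₀)/q`, one has `𝓛^u φ̃ ≤ qCε` and
`𝓛^u (φ̃ + Cε) ≤ 0` a.e. on `[0, x^max]`, for every retention policy `u`. -/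
theorem polynomial_perturbation_generator_estimate
    (F : Measure ℝ) [IsProbabilityMeasure F] (hF : F (Iio 0) = 0)
    (hmean : Integrable (fun y : ℝ => y) F)
    (p : ℝ → ℝ → ℝ) (P1 : ℝ) (hA1 : AssumptionA1 p) (hA2 : AssumptionA2 F p P1)
    (lam q : ℝ) (hlam : 0 < lam) (hq : 0 < q)
    (xmax ε : ℝ) (hxmax : 0 < xmax) (hε : 0 < ε)
    (φ φd : ℝ → ℝ) (hφmeas : Measurable φ)
    (hdiff : ∀ᵐ y : ℝ ∂volume, HasDerivAt φ (φd y) y)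
    (hφgen : ∀ᵐ y ∂(volume.restrict (Icc (0:ℝ) xmax)),
      ∀ u : ℝ → ℝ, IsRetention u → gen F p lam q u φ φd y ≤ 0)
    (φt : ℝ → ℝ) (hφt : ContDiff ℝ 1 φt)
    (hclose : ∀ z : ℝ, z ≤ xmax → |φt z - φ z| ≤ ε * |z|)
    (hdclose : ∀ᵐ y ∂(volume.restrict (Icc (0:ℝ) xmax)), |deriv φt y - φd y| ≤ ε) :
    ∀ᵐ y ∂(volume.restrict (Icc (0:ℝ) xmax)), ∀ u : ℝ → ℝ, IsRetention u →
      gen F p lam q u φt (deriv φt) y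
        ≤ q * (((P1 + 2 * lam + q) * xmax + lam * (∫ y', y' ∂F) + ∫ y', p y' 0 ∂F) / q) * ε ∧
      gen F p lam q u
        (fun z => φt z
          + (((P1 + 2 * lam + q) * xmax + lam * (∫ y', y' ∂F) + ∫ y', p y' 0 ∂F) / q) * ε)
        (deriv (fun z => φt z
          + (((P1 + 2 * lam + q) * xmax + lam * (∫ y', y' ∂F) + ∫ y', p y' 0 ∂F) / q) * ε))
        y ≤ 0 := by
  classical
  obtain ⟨hp_nonneg, hp_mono1, _hp_mono2⟩ := hA1
  obtain ⟨hp_meas, hp_cont, hp0_int, hP1, hsup_int, hsup_bound⟩ := hA2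
  obtain ⟨EC, hEC⟩ : ∃ EC : ℝ, EC = ∫ y', y' ∂F := ⟨_, rfl⟩
  obtain ⟨p0, hp0⟩ : ∃ p0 : ℝ, p0 = ∫ y', p y' 0 ∂F := ⟨_, rfl⟩
  obtain ⟨X, hX⟩ : ∃ X : ℝ, X = (P1 + 2 * lam + q) * xmax + lam * EC + p0 := ⟨_, rfl⟩
  rw [← hEC, ← hp0, ← hX]
  -- F-a.e. nonnegativity of claims
  have hFae : ∀ᵐ y' ∂F, 0 ≤ y' := by
    rw [ae_iff]
    simp only [not_le]; exact hF
  have hpcont : ContinuousOn (fun z : ℝ × ℝ => p z.1 z.2) (Ici 0 ×ˢ Ici 0) :=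
    hp_cont.continuousOn
  -- boundedness of the sets defining supDiff
  have hbdd : ∀ x x' z : ℝ, 0 ≤ x → 0 ≤ x' → 0 ≤ z →
      BddAbove ((fun w => |p w x - p w x'|) '' Icc 0 z) := by
    intro x x' z hx hx' _hz
    have hcx : ContinuousOn (fun w : ℝ => p w x) (Icc 0 z) := by
      apply hpcont.comp ((continuous_id.prodMk continuous_const).continuousOn)
      intro w hw; exact ⟨hw.1, hx⟩
    have hcx' : ContinuousOn (fun w : ℝ => p w x') (Icc 0 z) := by
      apply hpcont.comp ((continuous_id.prodMk continuous_const).continuousOn)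
      intro w hw; exact ⟨hw.1, hx'⟩
    have hc : ContinuousOn (fun w : ℝ => |p w x - p w x'|) (Icc 0 z) := (hcx.sub hcx').abs
    exact (isCompact_Icc.image_of_continuousOn hc).bddAbove
  have hEC_nonneg : 0 ≤ EC := hEC ▸ integral_nonneg_of_ae hFae
  have hp0_nonneg : 0 ≤ p0 :=
    hp0 ▸ integral_nonneg_of_ae (hFae.mono fun y' h => hp_nonneg y' 0 h le_rfl)
  have hX_nonneg : 0 ≤ X := by
    have : 0 ≤ (P1 + 2 * lam + q) * xmax := by positivity
    nlinarith [hlam.le, hq.le]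
  have hqX : q * (X / q) * ε = X * ε := by field_simp
  filter_upwards [hφgen, hdclose, ae_restrict_mem measurableSet_Icc] with y Hgen Hd hy
  intro u hu
  obtain ⟨humeas, hu0⟩ := hu
  have hy0 : 0 ≤ y := hy.1
  have hyx : y ≤ xmax := hy.2
  have Hg : gen F p lam q u φ φd y ≤ 0 := Hgen u ⟨humeas, hu0⟩
  have hmsub : Measurable (fun y' : ℝ => y - u y') := measurable_const.sub humeas
  -- the premium integral I and its bounds
  obtain ⟨I, hI⟩ : ∃ I : ℝ, I = ∫ y', p (u y') y ∂F := ⟨_, rfl⟩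
  have hfmeas : Measurable (fun y' : ℝ => p (u y') y) :=
    hp_meas.comp (humeas.prodMk measurable_const)
  have hsupint : Integrable (fun y' => supDiff p y 0 y') F := hsup_int y 0 hy0 le_rfl
  have hg_int : Integrable (fun y' : ℝ => p y' 0 + supDiff p y 0 y') F :=
    hp0_int.add hsupint
  have hfg : ∀ᵐ y' ∂F, 0 ≤ p (u y') y ∧ p (u y') y ≤ p y' 0 + supDiff p y 0 y' := by
    filter_upwards [hFae] with y' hy'
    obtain ⟨hu1, hu2⟩ := hu0 y' hy'
    have h2 : |p (u y') y - p (u y') 0| ≤ supDiff p y 0 y' :=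
      le_csSup (hbdd y 0 y' hy0 le_rfl hy') ⟨u y', ⟨hu1, hu2⟩, rfl⟩
    have h1 : p (u y') y - p (u y') 0 ≤ |p (u y') y - p (u y') 0| := le_abs_self _
    have h3 : p (u y') 0 ≤ p y' 0 := hp_mono1 0 le_rfl hu1 hy' hu2
    exact ⟨hp_nonneg _ _ hu1 hy0, by linarith⟩
  have hf_int : Integrable (fun y' : ℝ => p (u y') y) F := by
    refine Integrable.mono hg_int hfmeas.aestronglyMeasurable ?_
    filter_upwards [hfg] with y' ⟨h1, h2⟩
    rw [Real.norm_eq_abs, Real.norm_eq_abs, abs_of_nonneg h1]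
    exact h2.trans (le_abs_self _)
  have hI_nonneg : 0 ≤ I :=
    hI ▸ integral_nonneg_of_ae (hfg.mono fun y' h => h.1)
  have hI_le : I ≤ p0 + P1 * xmax := by
    have h1 : I ≤ ∫ y', (p y' 0 + supDiff p y 0 y') ∂F :=
      hI ▸ integral_mono_ae hf_int hg_int (hfg.mono fun y' h => h.2)
    have h2 : (∫ y', (p y' 0 + supDiff p y 0 y') ∂F)
        = p0 + ∫ y', supDiff p y 0 y' ∂F := hp0 ▸ integral_add hp0_int hsupint
    have h3 : (∫ y', supDiff p y 0 y' ∂F) ≤ P1 * |y - 0| := hsup_bound y 0 hy0 le_rfl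
    rw [sub_zero, abs_of_nonneg hy0] at h3
    have h4 : P1 * y ≤ P1 * xmax := mul_le_mul_of_nonneg_left hyx hP1
    linarith
  -- the perturbation h := φt∘ − φ∘ and its bounds
  have hhmeas : Measurable (fun y' : ℝ => φt (y - u y') - φ (y - u y')) :=
    (hφt.continuous.measurable.comp hmsub).sub (hφmeas.comp hmsub)
  have hhbound : ∀ᵐ y' ∂F, |φt (y - u y') - φ (y - u y')| ≤ ε * (xmax + y') := by
    filter_upwards [hFae] with y' hy'
    obtain ⟨hu1, hu2⟩ := hu0 y' hy'
    have hz : y - u y' ≤ xmax := by linarith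
    have h1 : |φt (y - u y') - φ (y - u y')| ≤ ε * |y - u y'| := hclose _ hz
    have h2 : |y - u y'| ≤ xmax + y' := by
      rw [abs_le]; constructor <;> linarith
    calc |φt (y - u y') - φ (y - u y')| ≤ ε * |y - u y'| := h1
      _ ≤ ε * (xmax + y') := mul_le_mul_of_nonneg_left h2 hε.le
  have hdom : Integrable (fun y' : ℝ => ε * (xmax + y')) F :=
    ((integrable_const xmax).add hmean).const_mul ε
  have hh_int : Integrable (fun y' : ℝ => φt (y - u y') - φ (y - u y')) F := by
    refine Integrable.mono hdom hhmeas.aestronglyMeasurable ?_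
    filter_upwards [hhbound] with y' h
    rw [Real.norm_eq_abs, Real.norm_eq_abs]
    exact h.trans (le_abs_self _)
  have hdom_int : (∫ y', ε * (xmax + y') ∂F) = ε * (xmax + EC) := by
    rw [integral_const_mul, integral_add (integrable_const xmax) hmean, ← hEC]
    simp
  have hh_le : (∫ y', (φt (y - u y') - φ (y - u y')) ∂F) ≤ ε * (xmax + EC) := by
    have h1 : (∫ y', (φt (y - u y') - φ (y - u y')) ∂F)
        ≤ ∫ y', |φt (y - u y') - φ (y - u y')| ∂F :=
      integral_mono_ae hh_int hh_int.abs (Eventually.of_forall fun y' => le_abs_self _)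
    have h2 : (∫ y', |φt (y - u y') - φ (y - u y')| ∂F) ≤ ∫ y', ε * (xmax + y') ∂F :=
      integral_mono_ae hh_int.abs hdom hhbound
    rw [hdom_int] at h2; linarith
  -- bound on A − B
  have hAB : (∫ y', φt (y - u y') ∂F) - (∫ y', φ (y - u y') ∂F) ≤ ε * (xmax + EC) := by
    by_cases hB : Integrable (fun y' : ℝ => φ (y - u y')) F
    · have hA : Integrable (fun y' : ℝ => φt (y - u y')) F := by
        exact (hB.add hh_int).congr (Eventually.of_forall fun y' => by
          simp only [Pi.add_apply]; ring)
      rw [← integral_sub hA hB]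
      exact hh_le
    · have hA : ¬ Integrable (fun y' : ℝ => φt (y - u y')) F := by
        intro hA
        exact hB ((hA.sub hh_int).congr (Eventually.of_forall fun y' => by
          simp only [Pi.sub_apply]; ring))
      rw [integral_undef hA, integral_undef hB]
      have : 0 ≤ ε * (xmax + EC) := by positivity
      linarith
  -- pointwise closeness at y
  have hcy : |φt y - φ y| ≤ ε * xmax := by
    have h1 : |φt y - φ y| ≤ ε * |y| := hclose y hyx
    rw [abs_of_nonneg hy0] at h1
    exact h1.trans (mul_le_mul_of_nonneg_left hyx hε.le)
  -- the main estimate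
  have key : gen F p lam q u φt (deriv φt) y ≤ X * ε := by
    have t1 : I * deriv φt y ≤ I * φd y + (p0 + P1 * xmax) * ε := by
      have h1 : deriv φt y - φd y ≤ ε := (le_abs_self _).trans Hd
      have h2 : I * (deriv φt y - φd y) ≤ I * ε := mul_le_mul_of_nonneg_left h1 hI_nonneg
      have h3 : I * ε ≤ (p0 + P1 * xmax) * ε := mul_le_mul_of_nonneg_right hI_le hε.le
      nlinarith
    have t2 : lam * (∫ y', φt (y - u y') ∂F)
        ≤ lam * (∫ y', φ (y - u y') ∂F) + lam * (ε * (xmax + EC)) := by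
      nlinarith [mul_le_mul_of_nonneg_left hAB hlam.le]
    have t3 : (lam + q) * (φ y) ≤ (lam + q) * (φt y) + (lam + q) * (ε * xmax) := by
      have h1 : φ y - φt y ≤ ε * xmax := by
        have := neg_abs_le (φt y - φ y); linarith
      nlinarith [mul_le_mul_of_nonneg_left h1 (by linarith : (0:ℝ) ≤ lam + q)]
    have hXeq : X * ε = (p0 + P1 * xmax) * ε + lam * (ε * (xmax + EC))
        + (lam + q) * (ε * xmax) := by rw [hX]; ring
    simp only [gen] at Hg ⊢
    rw [← hI] at Hg ⊢
    linarith
  constructor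
  · rw [hqX]; exact key
  · have hqc : q * (X / q * ε) = X * ε := by field_simp
    have hc_nonneg : 0 ≤ X / q * ε := mul_nonneg (div_nonneg hX_nonneg hq.le) hε.le
    have hsum : (∫ y', (φt (y - u y') + X / q * ε) ∂F)
        ≤ (∫ y', φt (y - u y') ∂F) + X / q * ε := by
      by_cases hA : Integrable (fun y' : ℝ => φt (y - u y')) F
      · rw [integral_add hA (integrable_const (X / q * ε)), integral_const]
        simp
      · have hA' : ¬ Integrable (fun y' : ℝ => φt (y - u y') + X / q * ε) F := by
          intro h
          exact hA ((h.sub (integrable_const (X / q * ε))).congr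
            (Eventually.of_forall fun y' => by simp only [Pi.sub_apply]; ring))
        rw [integral_undef hA, integral_undef hA']
        linarith
    simp only [gen, deriv_add_const] at key ⊢
    rw [← hI] at key ⊢
    have h2 : lam * (∫ y', (φt (y - u y') + X / q * ε) ∂F)
        ≤ lam * (∫ y', φt (y - u y') ∂F) + lam * (X / q * ε) :=
      (mul_le_mul_of_nonneg_left hsum hlam.le).trans (le_of_eq (by ring))
    have hexp : (lam + q) * (φt y + X / q * ε)
        = (lam + q) * φt y + lam * (X / q * ε) + q * (X / q * ε) := by ring
    linarith
end
end
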